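/- The map ρ : X → Â² defined by ρ(x) = ((x₂,x₄),(x₁:−x₃)) is constant on F-orbits, where F = ℂ acts by a ∘ x = (x₁ + a x₂, x₂, x₃ − a x₄, x₄), and ρ separates the F-orbits of points with (x₂,x₄) ≠ (0,0): two such points have the same image under ρ if and only if they lie in the same F-orbit. -/

import Mathlib

def actF (a : ℂ) (x : Fin 4 → ℂ) : Fin 4 → ℂ :=
  ![x 0 + a * x 1, x 1, x 2 - a * x 3, x 3]

def inX (x : Fin 4 → ℂ) : Prop := x 0 * x 3 + x 1 * x 2 = 0 ∧ x ≠ 0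

abbrev P1 := Projectivization ℂ (Fin 2 → ℂ)

lemma mk_eq_of_cross {v w : Fin 2 → ℂ} (hv : v ≠ 0) (hw : w ≠ 0)
    (h : v 0 * w 1 = v 1 * w 0) :
    Projectivization.mk ℂ v hv = Projectivization.mk ℂ w hw := by
  rw [Projectivization.mk_eq_mk_iff']
  by_cases h0 : w 0 = 0
  · have h1 : w 1 ≠ 0 := by
      intro h1
      apply hw
      funext i
      fin_cases i <;> simp [h0, h1]
    refine ⟨v 1 / w 1, ?_⟩
    funext i
    fin_cases i
    · show v 1 / w 1 * w 0 = v 0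
      have hv0 : v 0 = 0 := by
        have : v 0 * w 1 = 0 := by rw [h, h0]; ring
        exact (mul_eq_zero.mp this).resolve_right h1
      rw [h0, hv0]; ring
    · show v 1 / w 1 * w 1 = v 1
      field_simp
  · refine ⟨v 0 / w 0, ?_⟩
    funext i
    fin_cases i
    · show v 0 / w 0 * w 0 = v 0
      field_simp
    · show v 0 / w 0 * w 1 = v 1
      field_simp
      linear_combination h

theorem stmt15 :
    (∀ (a : ℂ) (x : Fin 4 → ℂ), inX x →
      (actF a x 1 = x 1 ∧ actF a x 3 = x 3) ∧
      ∀ (h' : ![actF a x 0, -(actF a x 2)] ≠ 0) (h : ![x 0, -(x 2)] ≠ 0),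
        Projectivization.mk ℂ ![actF a x 0, -(actF a x 2)] h' =
          Projectivization.mk ℂ ![x 0, -(x 2)] h) ∧
    (∀ x y : Fin 4 → ℂ, inX x → inX y →
      ∀ (hx : ![x 1, x 3] ≠ 0) (hy : ![y 1, y 3] ≠ 0),
      ((((x 1, x 3) : ℂ × ℂ), Projectivization.mk ℂ ![x 1, x 3] hx) =
        (((y 1, y 3) : ℂ × ℂ), Projectivization.mk ℂ ![y 1, y 3] hy) ↔
          ∃ a : ℂ, actF a x = y)) := by
  constructor
  · intro a x hxX
    refine ⟨⟨rfl, rfl⟩, ?_⟩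
    intro h' h
    apply mk_eq_of_cross
    show (x 0 + a * x 1) * (-(x 2)) = (-(x 2 - a * x 3)) * x 0
    linear_combination (-a) * hxX.1
  · intro x y hxX hyX hx hy
    constructor
    · intro heq
      have h1 : x 1 = y 1 := congrArg (fun p => p.1.1) heq
      have h3 : x 3 = y 3 := congrArg (fun p => p.1.2) heq
      by_cases hx1 : x 1 = 0
      · have hx3 : x 3 ≠ 0 := by
          intro h3'
          apply hx; funext i; fin_cases i <;> simp [hx1, h3']
        have hy1 : y 1 = 0 := h1 ▸ hx1
        have hx0 : x 0 = 0 := by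
          have h := hxX.1
          rw [hx1] at h
          have : x 0 * x 3 = 0 := by linear_combination h
          exact (mul_eq_zero.mp this).resolve_right hx3
        have hy0 : y 0 = 0 := by
          have h := hyX.1
          rw [hy1] at h
          have : y 0 * y 3 = 0 := by linear_combination h
          exact (mul_eq_zero.mp this).resolve_right (h3 ▸ hx3)
        refine ⟨(x 2 - y 2) / x 3, ?_⟩
        funext i
        fin_cases i
        · show x 0 + (x 2 - y 2) / x 3 * x 1 = y 0
          rw [hx0, hy0, hx1]; ring
        · exact h1
        · show x 2 - (x 2 - y 2) / x 3 * x 3 = y 2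
          field_simp
          ring
        · exact h3
      · refine ⟨(y 0 - x 0) / x 1, ?_⟩
        funext i
        fin_cases i
        · show x 0 + (y 0 - x 0) / x 1 * x 1 = y 0
          field_simp
          ring
        · exact h1
        · show x 2 - (y 0 - x 0) / x 1 * x 3 = y 2
          field_simp
          linear_combination hxX.1 - hyX.1 - y 0 * h3 - y 2 * h1 + x 3 * h1 * ((y 0 - x 0) / x 1) * 0
        · exact h3
    · rintro ⟨a, rfl⟩
      simp [actF]
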